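/- Let A and B be regular closed locally finite unions of convex bodies in ℝ^d. Then the set C := {x ∈ ℝ^d : A ∩ (B − x) is not regular closed} has Lebesgue measure zero (it is contained in a countable union of boundaries of convex bodies). -/

import Mathlib

open MeasureTheory Set Pointwise

section Aux

variable {X : Type*} [TopologicalSpace X]

/-- A nonempty open set contained in a finite union of closed sets contains a point in the
interior of one of them. -/
lemma aux_open_in_finite_union (K : ℕ → Set X) (hK : ∀ i, IsClosed (K i)) (F : Finset ℕ) :
    ∀ O : Set X, IsOpen O → O.Nonempty → O ⊆ ⋃ i ∈ F, K i →
      ∃ q ∈ O, ∃ i, q ∈ interior (K i) := by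
  induction F using Finset.induction_on with
  | empty =>
      intro O _ ⟨q, hq⟩ hsub
      simpa using hsub hq
  | @insert i0 F hi0 ih =>
      intro O hO hne hsub
      by_cases h : (O \ K i0).Nonempty
      · obtain ⟨q, hq, i, hqi⟩ := ih (O \ K i0) (hO.sdiff (hK i0)) h (by
          intro y hy
          have := hsub hy.1
          rw [Finset.set_biUnion_insert] at this
          rcases this with h' | h'
          · exact absurd h' hy.2
          · exact h')
        exact ⟨q, hq.1, i, hqi⟩
      · have hOK : O ⊆ K i0 := by
          intro y hy
          by_contra hn
          exact h ⟨y, hy, hn⟩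
        obtain ⟨q, hq⟩ := hne
        exact ⟨q, hq, i0, interior_maximal hOK hO hq⟩

/-- A regular closed locally finite union of closed sets is covered by the closures of the
interiors of the pieces. -/
lemma aux_mem_closure_iUnion_interior (K : ℕ → Set X) (hK : ∀ i, IsClosed (K i))
    (hloc : LocallyFinite K) {A : Set X} (hA : A = ⋃ i, K i)
    (hreg : A = closure (interior A)) : A ⊆ ⋃ i, closure (interior (K i)) := by
  have h1 : interior A ⊆ closure (⋃ i, interior (K i)) := by
    intro p hp
    rw [mem_closure_iff]
    intro o ho hpo
    obtain ⟨W, hW, hWfin⟩ := hloc p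
    set O := o ∩ interior A ∩ interior W with hOdef
    have hOopen : IsOpen O := ((ho.inter isOpen_interior).inter isOpen_interior)
    have hpO : p ∈ O := ⟨⟨hpo, hp⟩, mem_interior_iff_mem_nhds.2 hW⟩
    have hsub : O ⊆ ⋃ i ∈ hWfin.toFinset, K i := by
      intro q hq
      have hqA : q ∈ A := interior_subset hq.1.2
      rw [hA] at hqA
      obtain ⟨i, hqi⟩ := mem_iUnion.1 hqA
      exact Set.mem_biUnion (hWfin.mem_toFinset.2 ⟨q, hqi, interior_subset hq.2⟩) hqi
    obtain ⟨q, hq, i, hqint⟩ :=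
      aux_open_in_finite_union K hK hWfin.toFinset O hOopen ⟨p, hpO⟩ hsub
    exact ⟨q, hq.1.1, mem_iUnion.2 ⟨i, hqint⟩⟩
  calc A = closure (interior A) := hreg
    _ ⊆ closure (closure (⋃ i, interior (K i))) := closure_mono h1
    _ = closure (⋃ i, interior (K i)) := closure_closure
    _ = ⋃ i, closure (interior (K i)) :=
        (hloc.subset fun i => interior_subset).closure_iUnion

end Aux

section Convex

variable {E : Type*} [NormedAddCommGroup E] [NormedSpace ℝ E]

lemma aux_closure_interior {s : Set E} (hs : Convex ℝ s) (hcl : IsClosed s)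
    (hne : (interior s).Nonempty) : closure (interior s) = s := by
  refine subset_antisymm (closure_minimal interior_subset hcl) ?_
  intro y hy
  obtain ⟨a, ha⟩ := hne
  have hseg : openSegment ℝ a y ⊆ interior s :=
    hs.openSegment_interior_self_subset_interior ha hy
  have hyc : y ∈ closure (openSegment ℝ a y) :=
    segment_subset_closure_openSegment (right_mem_segment ℝ a y)
  exact closure_mono hseg hyc

lemma aux_interior_closure {D : Set E} (hD : Convex ℝ D) (hO : IsOpen D)
    (hne : D.Nonempty) : interior (closure D) = D := by
  refine subset_antisymm ?_ (interior_maximal subset_closure hO)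
  intro p hp
  obtain ⟨c, hc⟩ := hne
  obtain ⟨ε, hε, hball⟩ := Metric.isOpen_iff.1 isOpen_interior p hp
  set t : ℝ := ε / (2 * (‖p - c‖ + 1)) with ht_def
  have ht : 0 < t := div_pos hε (by positivity)
  have hq : p + t • (p - c) ∈ closure D := by
    refine interior_subset (hball ?_)
    rw [Metric.mem_ball, dist_eq_norm]
    have h1 : p + t • (p - c) - p = t • (p - c) := by abel
    rw [h1, norm_smul, Real.norm_eq_abs, abs_of_pos ht]
    have hnn : (0:ℝ) ≤ ‖p - c‖ := norm_nonneg _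
    rw [ht_def, div_mul_eq_mul_div, div_lt_iff₀ (by positivity)]
    nlinarith
  have hc' : c ∈ interior D := by rwa [hO.interior_eq]
  have h1t : (0:ℝ) < 1 + t := by positivity
  have key := hD.combo_interior_closure_mem_interior (a := t / (1 + t)) (b := 1 / (1 + t))
    hc' hq (by positivity) (by positivity) (by field_simp; ring)
  have heq : (t / (1 + t)) • c + (1 / (1 + t)) • (p + t • (p - c)) = p := by
    have h1t' : (1:ℝ) + t ≠ 0 := ne_of_gt h1t
    match_scalars <;> field_simp <;> ring
  rw [heq, hO.interior_eq] at key
  exact key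

end Convex

/-- for regular closed sets `A, B` that are locally finite unions of convex
bodies, the set of translations `x` for which `A ∩ (B - x)` is not regular closed has
Lebesgue measure zero. -/
theorem bad_translations_null {d : ℕ}
    (A B : Set (EuclideanSpace ℝ (Fin d)))
    (KA KB : ℕ → Set (EuclideanSpace ℝ (Fin d)))
    (hKA : ∀ i, IsCompact (KA i) ∧ Convex ℝ (KA i) ∧ (KA i).Nonempty)
    (hKB : ∀ i, IsCompact (KB i) ∧ Convex ℝ (KB i) ∧ (KB i).Nonempty)
    (hAloc : LocallyFinite KA) (hBloc : LocallyFinite KB)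
    (hA : A = ⋃ i, KA i) (hB : B = ⋃ i, KB i)
    (hAreg : A = closure (interior A)) (hBreg : B = closure (interior B)) :
    volume {x | A ∩ ((fun b => b - x) '' B) ≠
        closure (interior (A ∩ ((fun b => b - x) '' B)))} = 0 := by
  have hnull : volume (⋃ i : ℕ, ⋃ j : ℕ, frontier (KB j - KA i)) = 0 :=
    measure_iUnion_null fun i => measure_iUnion_null fun j =>
      ((hKB j).2.1.sub (hKA i).2.1).addHaar_frontier volume
  refine measure_mono_null ?_ hnull
  intro x hx
  by_contra hxN
  have hxf : ∀ i j : ℕ, x ∉ frontier (KB j - KA i) := by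
    intro i j hmem
    exact hxN (mem_iUnion.2 ⟨i, mem_iUnion.2 ⟨j, hmem⟩⟩)
  refine hx ?_
  set B' := (fun b => b - x) '' B with hB'def
  have hAcl : IsClosed A := hAreg ▸ isClosed_closure
  have hBcl : IsClosed B := hBreg ▸ isClosed_closure
  have hB'cl : IsClosed B' := isClosedMap_sub_right x B hBcl
  refine Set.Subset.antisymm ?_ (closure_minimal interior_subset (hAcl.inter hB'cl))
  rintro p ⟨hpA, hpB'⟩
  -- find a body of A containing p with nonempty interior
  obtain ⟨i, hpi⟩ := mem_iUnion.1
    (aux_mem_closure_iUnion_interior KA (fun i => (hKA i).1.isClosed) hAloc hA hAreg hpA)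
  have hiK : p ∈ KA i := closure_minimal interior_subset (hKA i).1.isClosed hpi
  have hiNe : (interior (KA i)).Nonempty := by
    by_contra h
    rw [not_nonempty_iff_eq_empty] at h
    rw [h, closure_empty] at hpi
    exact hpi
  -- p + x ∈ B, find a body of B containing it with nonempty interior
  obtain ⟨b, hbB, hbx⟩ := hpB'
  have hpxB : p + x ∈ B := by
    have hb : b = p + x := by
      have := hbx
      rw [sub_eq_iff_eq_add] at this
      rw [this, add_comm]
    rwa [← hb]
  obtain ⟨j, hpj⟩ := mem_iUnion.1
    (aux_mem_closure_iUnion_interior KB (fun j => (hKB j).1.isClosed) hBloc hB hBreg hpxB)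
  have hjK : p + x ∈ KB j := closure_minimal interior_subset (hKB j).1.isClosed hpj
  have hjNe : (interior (KB j)).Nonempty := by
    by_contra h
    rw [not_nonempty_iff_eq_empty] at h
    rw [h, closure_empty] at hpj
    exact hpj
  -- x is in the interior of the convex body KB j - KA i
  have hxmem : x ∈ KB j - KA i := by
    have := Set.sub_mem_sub hjK hiK
    simpa using this
  have hcpt : IsCompact (KB j - KA i) := by
    rw [sub_eq_add_neg]
    exact (hKB j).1.add (hKA i).1.neg
  have hDcl : IsClosed (KB j - KA i) := hcpt.isClosed
  have hxint : x ∈ interior (KB j - KA i) := by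
    by_contra h
    exact hxf i j (by rw [hDcl.frontier_eq]; exact ⟨hxmem, h⟩)
  -- interior of the difference body is the difference of interiors
  set D := interior (KB j) - interior (KA i) with hDdef
  have hDopen : IsOpen D := IsOpen.sub_right isOpen_interior
  have hDconv : Convex ℝ D := ((hKB j).2.1.interior).sub ((hKA i).2.1.interior)
  have hDne : D.Nonempty := by
    obtain ⟨a0, ha0⟩ := hiNe
    obtain ⟨b0, hb0⟩ := hjNe
    exact ⟨b0 - a0, Set.sub_mem_sub hb0 ha0⟩
  have hclD : closure D = KB j - KA i := by
    refine subset_antisymm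
      (closure_minimal (Set.sub_subset_sub interior_subset interior_subset) hDcl) ?_
    rintro z hz
    obtain ⟨u, hu, v, hv, rfl⟩ := Set.mem_sub.1 hz
    have hu' : u ∈ closure (interior (KB j)) := by
      rw [aux_closure_interior (hKB j).2.1 (hKB j).1.isClosed hjNe]; exact hu
    have hv' : v ∈ closure (interior (KA i)) := by
      rw [aux_closure_interior (hKA i).2.1 (hKA i).1.isClosed hiNe]; exact hv
    exact map_mem_closure₂ continuous_sub hu' hv'
      fun a ha b hb => Set.sub_mem_sub ha hb
  have hintD : interior (KB j - KA i) = D := by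
    rw [← hclD, aux_interior_closure hDconv hDopen hDne]
  rw [hintD] at hxint
  obtain ⟨bq, hbq, aq, haq, hxeq⟩ := Set.mem_sub.1 hxint
  -- the translate body
  set Lx := (fun b => b - x) '' KB j with hLxdef
  have hLxeq : Lx = KB j - {x} := by
    rw [Set.sub_singleton]
  have hLxconv : Convex ℝ Lx := by
    rw [hLxeq]
    exact (hKB j).2.1.sub (convex_singleton x)
  have hintLx : interior Lx = (fun b => b - x) '' interior (KB j) :=
    ((Homeomorph.subRight x).image_interior (KB j)).symm
  have haqLx : aq ∈ interior Lx := by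
    rw [hintLx]
    exact ⟨bq, hbq, by show bq - x = aq; rw [← hxeq]; exact sub_sub_cancel bq aq⟩
  have hKAsub : KA i ⊆ A := by rw [hA]; exact subset_iUnion KA i
  have hLxsub : Lx ⊆ B' := Set.image_mono (by rw [hB]; exact subset_iUnion KB j)
  have hTsub : interior (KA i) ∩ interior Lx ⊆ interior (A ∩ B') :=
    interior_maximal
      (fun z hz => ⟨hKAsub (interior_subset hz.1), hLxsub (interior_subset hz.2)⟩)
      (isOpen_interior.inter isOpen_interior)
  have hpLx : p ∈ Lx := ⟨p + x, hjK, add_sub_cancel_right p x⟩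
  have hseg1 : openSegment ℝ aq p ⊆ interior (KA i) :=
    (hKA i).2.1.openSegment_interior_self_subset_interior haq hiK
  have hseg2 : openSegment ℝ aq p ⊆ interior Lx :=
    hLxconv.openSegment_interior_self_subset_interior haqLx hpLx
  have hpc : p ∈ closure (openSegment ℝ aq p) :=
    segment_subset_closure_openSegment (right_mem_segment ℝ aq p)
  exact closure_mono (fun z hz => hTsub ⟨hseg1 hz, hseg2 hz⟩) hpc
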